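/- Let numbers a_1, a_2, … ∈ [0,∞) satisfy sup_{m,n} |a_{m+n} − √(a_m² + a_n²)| < ∞. Then the limit lim_{n→∞} (a_n/√n) exists in [0,∞). -/

import Mathlib

set_option maxHeartbeats 1000000

open Filter Topology

lemma aux_sqrt_quad {u v ε δ : ℝ} (hu : 0 ≤ u) (hv : 0 ≤ v) (hε : 0 ≤ ε) (hδ : 0 ≤ δ)
    (h : v^2 ≤ u^2 + ε*v + δ) : v ≤ u + ε + Real.sqrt δ := by
  have hs : 0 ≤ Real.sqrt δ := Real.sqrt_nonneg δ
  have hs2 : Real.sqrt δ ^ 2 = δ := Real.sq_sqrt hδ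
  nlinarith [sq_nonneg (v - u - ε - Real.sqrt δ), mul_nonneg hu hs, mul_nonneg hε hs,
    mul_nonneg hu hε, mul_nonneg hu hv, mul_nonneg hε hv, mul_nonneg hv hs]

lemma aux_self_bound {x c K : ℝ} (hx : 0 ≤ x) (hc : 0 ≤ c) (hK : 0 ≤ K)
    (h : x ≤ c * Real.sqrt x + K) : x ≤ (c + Real.sqrt K)^2 := by
  have ht : Real.sqrt x ^ 2 = x := Real.sq_sqrt hx
  have h2 : Real.sqrt x ^ 2 ≤ Real.sqrt K ^ 2 + c * Real.sqrt x + 0 := by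
    rw [Real.sq_sqrt hK, ht]; linarith
  have := aux_sqrt_quad (Real.sqrt_nonneg K) (Real.sqrt_nonneg x) hc le_rfl h2
  rw [Real.sqrt_zero, add_zero] at this
  nlinarith [Real.sqrt_nonneg x, Real.sqrt_nonneg K]

/-- Lemma 7.4: if nonnegative numbers `a_1, a_2, …` satisfy
`sup_{m,n ≥ 1} |a_{m+n} - √(a_m² + a_n²)| < ∞`, then `lim_n a_n/√n` exists in `[0, ∞)`. -/
theorem limit_of_almost_additive_sqrt (a : ℕ → ℝ)
    (ha : ∀ n, 1 ≤ n → 0 ≤ a n)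
    (h : ∃ C : ℝ, ∀ m n, 1 ≤ m → 1 ≤ n →
      |a (m + n) - Real.sqrt ((a m) ^ 2 + (a n) ^ 2)| ≤ C) :
    ∃ L : ℝ, 0 ≤ L ∧
      Tendsto (fun n : ℕ => a n / Real.sqrt n) atTop (𝓝 L) := by
  obtain ⟨C, hC⟩ := h
  have hC0 : 0 ≤ C := le_trans (abs_nonneg _) (hC 1 1 le_rfl le_rfl)
  -- approximate additivity of squares
  have habs : ∀ m n, 1 ≤ m → 1 ≤ n →
      |a (m+n)^2 - (a m^2 + a n^2)| ≤ 2*C*a (m+n) + C^2 := by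
    intro m n hm hn
    have h1 := hC m n hm hn
    set s := Real.sqrt (a m ^2 + a n ^2) with hs
    have hs0 : 0 ≤ s := Real.sqrt_nonneg _
    have hs2 : s^2 = a m ^2 + a n ^2 := Real.sq_sqrt (by positivity)
    have hA : 0 ≤ a (m+n) := ha _ (by omega)
    rw [abs_le] at h1 ⊢
    constructor <;> nlinarith [h1.1, h1.2, hs0, hA, hC0]
  -- doubling
  have hdbl : ∀ k, 1 ≤ k → a (2*k) ≤ Real.sqrt 2 * a k + 3*C := by
    intro k hk
    have h1 := habs k k hk hk
    rw [abs_le] at h1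
    have hA : 0 ≤ a (2*k) := ha _ (by omega)
    have hak : 0 ≤ a k := ha _ hk
    have h2 : a (2*k) ^2 ≤ (Real.sqrt 2 * a k)^2 + (2*C) * a (2*k) + C^2 := by
      have : (Real.sqrt 2 * a k)^2 = 2 * a k ^2 := by
        rw [mul_pow, Real.sq_sqrt (by norm_num)]
      rw [this]
      have := h1.2
      have e : k + k = 2*k := by ring
      rw [e] at this
      linarith
    have h3 := aux_sqrt_quad (by positivity) hA (by positivity) (by positivity) h2
    have h4 : Real.sqrt (C^2) = C := Real.sqrt_sq hC0
    rw [h4] at h3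
    linarith
  -- growth along dyadics
  have hG : ∀ n, 1 ≤ n → ∀ j, a (2^j * n) ≤ Real.sqrt 2 ^ j * (a n + 8*C) - 8*C := by
    intro n hn j
    induction j with
    | zero => simp
    | succ j ih =>
      have hk : 1 ≤ 2^j * n := Nat.mul_pos (pow_pos (by norm_num) j) (by omega)
      have h1 := hdbl (2^j * n) hk
      have e : 2 * (2^j * n) = 2^(j+1) * n := by ring
      rw [e] at h1
      have hs1 : (1.4 : ℝ) ≤ Real.sqrt 2 := by
        rw [show (1.4:ℝ) = Real.sqrt (1.4^2) from (Real.sqrt_sq (by norm_num)).symm]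
        exact Real.sqrt_le_sqrt (by norm_num)
      have hs0 : (0:ℝ) ≤ Real.sqrt 2 := Real.sqrt_nonneg 2
      calc a (2^(j+1) * n) ≤ Real.sqrt 2 * a (2^j * n) + 3*C := h1
        _ ≤ Real.sqrt 2 * (Real.sqrt 2 ^ j * (a n + 8*C) - 8*C) + 3*C := by
            nlinarith [ih]
        _ ≤ Real.sqrt 2 ^ (j+1) * (a n + 8*C) - 8*C := by
            rw [pow_succ]
            nlinarith
  -- abbreviations
  set S := Real.sqrt 2 with hSdef
  have hs1 : (1.4 : ℝ) ≤ S := by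
    rw [hSdef, show (1.4:ℝ) = Real.sqrt (1.4^2) from (Real.sqrt_sq (by norm_num)).symm]
    exact Real.sqrt_le_sqrt (by norm_num)
  have hS0 : (0:ℝ) < S := by linarith
  have hS2 : S^2 = 2 := by rw [hSdef]; exact Real.sq_sqrt (by norm_num)
  set w := S⁻¹ with hwdef
  have hw0 : 0 < w := by positivity
  have hw1 : w < 1 := by
    rw [hwdef]
    exact inv_lt_one_of_one_lt₀ (by linarith)
  set r : ℕ → ℝ := fun k => a k ^ 2 / k with hrdef
  set K : ℕ → ℝ := fun n => (2*C*(a n + 8*C) + C^2) / n with hKdef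
  have hK0 : ∀ n, 1 ≤ n → 0 ≤ K n := by
    intro n hn
    have han := ha n hn
    simp only [hKdef]
    exact div_nonneg (by nlinarith) (Nat.cast_nonneg n)
  -- key geometric estimate
  have key : ∀ n, 1 ≤ n → ∀ j,
      dist (r (2^j*n)) (r (2^(j+1)*n)) ≤ (K n * w) * w^j := by
    intro n hn j
    have hn0 : (0:ℝ) < n := by exact_mod_cast hn
    set D := a n + 8*C with hDdef
    have hD0 : 0 ≤ D := by have := ha n hn; rw [hDdef]; linarith
    set P := S ^ (j+1) with hPdef
    have hP0 : (0:ℝ) < P := by positivity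
    have hP1 : (1:ℝ) ≤ P := one_le_pow₀ (by linarith)
    have hP2 : P^2 = (2:ℝ)^(j+1) := by
      rw [hPdef, ← pow_mul, mul_comm (j+1) 2, pow_mul, hS2]
    set W := w ^ (j+1) with hWdef
    have hWP : W * P = 1 := by
      rw [hWdef, hPdef, hwdef, ← mul_pow, inv_mul_cancel₀ (ne_of_gt hS0), one_pow]
    have hW0 : 0 < W := by positivity
    set p := 2^j * n with hpdef
    have hp1 : 1 ≤ p := by
      rw [hpdef]; exact Nat.mul_pos (pow_pos (by norm_num) j) (by omega)
    have hpR : (0:ℝ) < (p:ℕ) := by exact_mod_cast hp1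
    have h1 := habs p p hp1 hp1
    have e : p + p = 2^(j+1)*n := by rw [hpdef]; ring
    rw [e] at h1
    set q := 2^(j+1) * n with hqdef
    have hqR : ((q:ℕ):ℝ) = P^2 * n := by rw [hqdef]; push_cast; rw [hP2]
    have hpR2 : (2:ℝ) * ((p:ℕ):ℝ) = P^2 * n := by
      rw [hpdef]; push_cast; rw [hP2]; ring
    have haq : a q ≤ P * D := by
      have := hG n hn (j+1)
      rw [← hqdef, ← hPdef, ← hDdef] at this
      linarith
    have haq0 : 0 ≤ a q := by
      refine ha q ?_
      rw [hqdef]; exact Nat.mul_pos (pow_pos (by norm_num) (j+1)) (by omega)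
    have hstep : dist (r p) (r q) ≤ (2*C*a q + C^2)/(P^2*(n:ℝ)) := by
      rw [Real.dist_eq]
      have hEq : r p - r q = -((a q^2 - (a p^2 + a p^2)) / (P^2*(n:ℝ))) := by
        simp only [hrdef]
        rw [hqR, ← hpR2]
        field_simp
        ring
      rw [hEq, abs_neg, abs_div, abs_of_pos (mul_pos (by positivity) hn0)]
      gcongr
    refine hstep.trans ?_
    have hRHS : (K n * w) * w^j = ((2*C*D + C^2) * W)/(n:ℝ) := by
      simp only [hKdef, hWdef, hDdef]
      ring
    rw [hRHS, div_le_div_iff₀ (by positivity) (by positivity)]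
    have hWP2 : W * P^2 = P := by rw [sq, ← mul_assoc, hWP, one_mul]
    have h2 : 2*C*a q + C^2 ≤ (2*C*D + C^2) * P := by nlinarith
    calc (2*C*a q + C^2) * (n:ℝ) ≤ ((2*C*D + C^2)*P) * n :=
          mul_le_mul_of_nonneg_right h2 (le_of_lt hn0)
      _ = (2*C*D+C^2)*W*(P^2*n) := by
          linear_combination (-((2*C*D+C^2)*(n:ℝ))) * hWP2
  -- existence of dyadic limits with distance control
  have hmain : ∀ n : ℕ, ∃ lv : ℝ,
      Tendsto (fun j => r (2^j * n)) atTop (𝓝 lv) ∧ dist (r n) lv ≤ 3 * K n := by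
    intro n
    rcases Nat.eq_zero_or_pos n with rfl | hn
    · refine ⟨r 0, ?_, ?_⟩
      · have e : (fun j : ℕ => r (2^j * 0)) = fun _ => r 0 := by
          funext j; rw [Nat.mul_zero]
        rw [e]; exact tendsto_const_nhds
      · rw [dist_self]
        simp [hKdef]
    · have hcs : CauchySeq (fun j => r (2^j*n)) :=
        cauchySeq_of_le_geometric w (K n * w) hw1 (key n hn)
      obtain ⟨lv, hlv⟩ := cauchySeq_tendsto_of_complete hcs
      refine ⟨lv, hlv, ?_⟩
      have hd := dist_le_of_le_geometric_of_tendsto₀ w (K n * w) hw1 (key n hn) hlv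
      simp only [pow_zero, one_mul] at hd
      have hKn := hK0 n hn
      have hwS : w * S = 1 := by rw [hwdef]; exact inv_mul_cancel₀ (ne_of_gt hS0)
      have hw34 : w ≤ 3/4 := by nlinarith
      have h1w : 0 < 1 - w := by linarith
      refine hd.trans ?_
      rw [div_le_iff₀ h1w]
      nlinarith
  choose l hltend hldist using hmain
  -- casting helper
  have hkr : ∀ k : ℕ, 1 ≤ k → ∀ j : ℕ, (k:ℝ) * r (2^j*k) = a (2^j*k)^2 / 2^j := by
    intro k hk j
    simp only [hrdef]
    have hk0 : (0:ℝ) < k := by exact_mod_cast hk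
    push_cast
    field_simp
  -- additivity of the limits
  have hadd : ∀ m n : ℕ, 1 ≤ m → 1 ≤ n →
      ((m:ℝ)+n) * l (m+n) = m * l m + n * l n := by
    intro m n hm hn
    set F : ℕ → ℝ :=
      fun j => ((m:ℝ)+n) * r (2^j*(m+n)) - m * r (2^j*m) - n * r (2^j*n) with hF
    have htendF : Tendsto F atTop
        (𝓝 (((m:ℝ)+n) * l (m+n) - m * l m - n * l n)) :=
      (((hltend (m+n)).const_mul _).sub ((hltend m).const_mul _)).sub
        ((hltend n).const_mul _)
    set D := a (m+n) + 8*C with hDdef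
    have hD0 : 0 ≤ D := by have := ha (m+n) (by omega); rw [hDdef]; linarith
    have hzero : Tendsto F atTop (𝓝 0) := by
      apply squeeze_zero_norm (a := fun j => (2*C*D + C^2) * w^j)
      · intro j
        have hP : S^j * w^j = 1 := by
          rw [hwdef, ← mul_pow, mul_inv_cancel₀ (ne_of_gt hS0), one_pow]
        have hSj1 : (1:ℝ) ≤ S^j := one_le_pow₀ (by linarith)
        have hwj0 : (0:ℝ) < w^j := by positivity
        have h2j : (2:ℝ)^j = S^j * S^j := by rw [← mul_pow]; rw [← hS2]; ring_nf
        have hFj : F j = (a (2^j*(m+n))^2 - a (2^j*m)^2 - a (2^j*n)^2) / 2^j := by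
          rw [hF]
          simp only
          have e1 : ((m:ℝ)+n) * r (2^j*(m+n)) = a (2^j*(m+n))^2/2^j := by
            have := hkr (m+n) (by omega) j
            push_cast at this
            linarith
          rw [e1, hkr m hm j, hkr n hn j]
          ring
        rw [hFj]
        have hj1 := habs (2^j*m) (2^j*n) (Nat.mul_pos (pow_pos (by norm_num) j) (by omega))
          (Nat.mul_pos (pow_pos (by norm_num) j) (by omega))
        have e2 : 2^j*m + 2^j*n = 2^j*(m+n) := by ring
        rw [e2] at hj1
        have hGj := hG (m+n) (by omega) j
        rw [← hDdef] at hGj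
        have haj0 : 0 ≤ a (2^j*(m+n)) := ha _ (Nat.mul_pos (pow_pos (by norm_num) j) (by omega))
        rw [Real.norm_eq_abs, abs_div, abs_of_pos (by positivity : (0:ℝ) < (2:ℝ)^j),
          div_le_iff₀ (by positivity : (0:ℝ) < (2:ℝ)^j)]
        have habs2 : |a (2^j*(m+n))^2 - a (2^j*m)^2 - a (2^j*n)^2| ≤ (2*C*D + C^2) * S^j := by
          have : |a (2^j*(m+n))^2 - a (2^j*m)^2 - a (2^j*n)^2|
              = |a (2^j*(m+n))^2 - (a (2^j*m)^2 + a (2^j*n)^2)| := by ring_nf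
          rw [this]
          refine hj1.trans ?_
          nlinarith
        refine habs2.trans ?_
        rw [h2j]
        have : (2*C*D + C^2) * w^j * (S^j * S^j) = (2*C*D + C^2) * S^j := by
          calc (2*C*D + C^2) * w^j * (S^j * S^j)
              = (2*C*D + C^2) * S^j * (S^j * w^j) := by ring
            _ = (2*C*D + C^2) * S^j := by rw [hP, mul_one]
        linarith
      · simpa using (tendsto_pow_atTop_nhds_zero_of_lt_one hw0.le hw1).const_mul (2*C*D + C^2)
    have := tendsto_nhds_unique htendF hzero
    linarith
  -- the limit is constant
  have hconst : ∀ n, 1 ≤ n → l n = l 1 := by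
    intro n
    induction n with
    | zero => omega
    | succ k ih =>
      intro _
      rcases Nat.eq_zero_or_pos k with rfl | hk
      · rfl
      · have h1 := hadd k 1 hk le_rfl
        rw [ih hk] at h1
        have hk1 : ((k:ℝ)+1) ≠ 0 := by positivity
        have h2 : ((k:ℝ)+1) * l (k+1) = ((k:ℝ)+1) * l 1 := by
          push_cast at h1 ⊢
          linarith
        exact mul_left_cancel₀ hk1 h2
  have hr0 : ∀ k : ℕ, 0 ≤ r k := by
    intro k; simp only [hrdef]; positivity
  set Λ := l 1 with hΛ
  have hΛ0 : 0 ≤ Λ := ge_of_tendsto' (hltend 1) (fun j => hr0 _)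
  clear_value Λ
  -- distance bound in terms of Λ
  have hdistΛ : ∀ n, 1 ≤ n → |r n - Λ| ≤ 3 * K n := by
    intro n hn
    have := hldist n
    rw [hconst n hn] at this
    rwa [Real.dist_eq] at this
  -- a n ≤ √(r n) √n
  have harn : ∀ n : ℕ, 1 ≤ n → a n ≤ Real.sqrt (r n) * Real.sqrt n := by
    intro n hn
    have hn0 : (0:ℝ) < n := by exact_mod_cast hn
    have han := ha n hn
    have h1 : r n * n = a n ^2 := by
      simp only [hrdef]; field_simp
    have heq : a n = Real.sqrt (r n) * Real.sqrt n := by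
      rw [← Real.sqrt_mul (hr0 n) (n:ℝ), h1, Real.sqrt_sq han]
    exact le_of_eq heq
  -- K bound
  have hKb : ∀ n : ℕ, 1 ≤ n → K n ≤ 2*C*Real.sqrt (r n) + 17*C^2 := by
    intro n hn
    have hn0 : (0:ℝ) < n := by exact_mod_cast hn
    have hn1 : (1:ℝ) ≤ n := by exact_mod_cast hn
    have hsn : Real.sqrt n ≤ n := by
      calc Real.sqrt n ≤ Real.sqrt ((n:ℝ)^2) := Real.sqrt_le_sqrt (by nlinarith)
        _ = n := Real.sqrt_sq hn0.le
    have h1 := harn n hn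
    have hsr0 : 0 ≤ Real.sqrt (r n) := Real.sqrt_nonneg _
    simp only [hKdef]
    rw [div_le_iff₀ hn0]
    nlinarith [mul_nonneg (mul_nonneg hC0 hsr0) (Real.sqrt_nonneg (n:ℝ)), hC0,
      mul_le_mul_of_nonneg_left hsn (mul_nonneg (by linarith : (0:ℝ) ≤ 2*C) hsr0)]
  -- uniform bound on r
  set R := (6*C + Real.sqrt (Λ + 51*C^2))^2 with hRdef
  have hRn : ∀ n, 1 ≤ n → r n ≤ R := by
    intro n hn
    have h1 := hdistΛ n hn
    have h2 := hKb n hn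
    have h3 : r n ≤ 6*C*Real.sqrt (r n) + (Λ + 51*C^2) := by
      have := abs_le.1 h1
      linarith [this.2]
    exact aux_self_bound (hr0 n) (by linarith) (by positivity) h3
  have hR0 : 0 ≤ R := by rw [hRdef]; positivity
  have hsR : 0 ≤ Real.sqrt R := Real.sqrt_nonneg R
  clear_value R
  -- convergence of r to Λ
  have hsqrtcast : Tendsto (fun n : ℕ => Real.sqrt n) atTop atTop := by
    apply tendsto_atTop_atTop.mpr
    intro b
    refine ⟨⌈b⌉₊^2, fun n hn => ?_⟩
    have h1 : ((⌈b⌉₊:ℝ))^2 ≤ (n:ℝ) := by exact_mod_cast hn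
    calc b ≤ ⌈b⌉₊ := Nat.le_ceil b
      _ = Real.sqrt ((⌈b⌉₊:ℝ)^2) := (Real.sqrt_sq (by positivity)).symm
      _ ≤ Real.sqrt n := Real.sqrt_le_sqrt h1
  have hinv : Tendsto (fun n : ℕ => (Real.sqrt n)⁻¹) atTop (𝓝 0) :=
    hsqrtcast.inv_tendsto_atTop
  have hfin : Tendsto (fun n : ℕ => r n) atTop (𝓝 Λ) := by
    rw [← tendsto_sub_nhds_zero_iff]
    apply squeeze_zero_norm' (a := fun n : ℕ => (6*C*Real.sqrt R + 51*C^2) * (Real.sqrt n)⁻¹)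
    · filter_upwards [eventually_ge_atTop 1] with n hn
      have hn0 : (0:ℝ) < n := by exact_mod_cast hn
      have hn1 : (1:ℝ) ≤ n := by exact_mod_cast hn
      have hsn0 : (0:ℝ) < Real.sqrt n := Real.sqrt_pos.2 hn0
      have hsn1 : (1:ℝ) ≤ Real.sqrt n := by
        rw [show (1:ℝ) = Real.sqrt 1 from (Real.sqrt_one).symm]
        exact Real.sqrt_le_sqrt hn1
      have hsnn : Real.sqrt n * Real.sqrt n = n := Real.mul_self_sqrt hn0.le
      have h1 := hdistΛ n hn
      have h2 := hKb n hn
      have hsrR : Real.sqrt (r n) ≤ Real.sqrt R := Real.sqrt_le_sqrt (hRn n hn)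
      have hsr0 : 0 ≤ Real.sqrt (r n) := Real.sqrt_nonneg _
      rw [Real.norm_eq_abs]
      have hKn2 : K n ≤ (2*C*Real.sqrt R + 17*C^2) * (Real.sqrt n)⁻¹ := by
        have h4 : a n ≤ Real.sqrt R * Real.sqrt n :=
          (harn n hn).trans (mul_le_mul_of_nonneg_right hsrR (Real.sqrt_nonneg _))
        have hinvn : (Real.sqrt (n:ℝ))⁻¹ * (n:ℝ) = Real.sqrt (n:ℝ) := by
          rw [inv_mul_eq_div, Real.div_sqrt]
        simp only [hKdef]
        rw [div_le_iff₀ hn0]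
        have e2 : (2*C*Real.sqrt R + 17*C^2) * (Real.sqrt n)⁻¹ * (n:ℝ)
            = (2*C*Real.sqrt R + 17*C^2) * Real.sqrt n := by
          rw [mul_assoc, hinvn]
        rw [e2]
        nlinarith [mul_le_mul_of_nonneg_left h4 (by linarith : (0:ℝ) ≤ 2*C),
          mul_nonneg (by nlinarith [sq_nonneg C] : (0:ℝ) ≤ 17*C^2)
            (by linarith : (0:ℝ) ≤ Real.sqrt n - 1), hC0, sq_nonneg C,
          mul_nonneg (mul_nonneg hC0 hsR) (by linarith : (0:ℝ) ≤ Real.sqrt n - 1)]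
      calc |r n - Λ| ≤ 3 * K n := h1
        _ ≤ 3 * ((2*C*Real.sqrt R + 17*C^2) * (Real.sqrt n)⁻¹) := by
            have := hKn2; linarith
        _ = (6*C*Real.sqrt R + 51*C^2) * (Real.sqrt n)⁻¹ := by ring
    · simpa using hinv.const_mul (6*C*Real.sqrt R + 51*C^2)
  -- finish
  refine ⟨Real.sqrt Λ, Real.sqrt_nonneg _, ?_⟩
  have hcont : Tendsto (fun n : ℕ => Real.sqrt (r n)) atTop (𝓝 (Real.sqrt Λ)) :=
    (Real.continuous_sqrt.tendsto Λ).comp hfin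
  apply hcont.congr'
  filter_upwards [eventually_ge_atTop 1] with n hn
  have hn0 : (0:ℝ) ≤ n := Nat.cast_nonneg n
  simp only [hrdef]
  rw [Real.sqrt_div (sq_nonneg _), Real.sqrt_sq (ha n hn)]
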